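/- Let a > −1, b > −1, c > max{0, a−b} be real numbers and d ∈ {0, 1}. Then for all nonnegative integers k and n with n ≥ 2k + 2, ∫_0^∞ x^k P_n^{(d)}(x; a, b, c) W(x; a, b, c+1−d) dx = 0. -/

import Mathlib

open MeasureTheory Filter Set

/-- Pochhammer symbol `(z)_k = z (z+1) ⋯ (z+k-1)`. -/
noncomputable def poch (z : ℝ) (k : ℕ) : ℝ := ∏ i ∈ Finset.range k, (z + i)

/-- Confluent hypergeometric function of the second kind (Tricomi function),
via its integral representation, valid for `α > 0`, `x > 0`. -/
noncomputable def TricomiU (α β x : ℝ) : ℝ :=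
  (1 / Real.Gamma α) *
    ∫ t in Set.Ioi (0:ℝ), t ^ (α - 1) * (1 + t) ^ (β - α - 1) * Real.exp (-t * x)

/-- The weight function `W(x; a, b, c)`. -/
noncomputable def W (a b c x : ℝ) : ℝ :=
  (Real.Gamma (c + b + 1) / (Real.Gamma (a + 1) * Real.Gamma (b + 1))) *
    Real.exp (-x) * x ^ a * TricomiU c (a - b + 1) x

/-- The monic type II multiple orthogonal polynomial on the step line:
`P_n^{(d)}(x; a, b, c) = Σ_{j=0}^n (−1)^{n−j} C(n,j)
  ((a+1+j)_{n−j}(b+1+j)_{n−j}/(c+b+1+⌊(n+d)/2⌋+j)_{n−j}) x^j`. -/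
noncomputable def Ptype2 (d : ℕ) (a b c : ℝ) (n : ℕ) (x : ℝ) : ℝ :=
  ∑ j ∈ Finset.range (n + 1),
    (-1 : ℝ) ^ (n - j) * (n.choose j : ℝ) *
      (poch (a + 1 + j) (n - j) * poch (b + 1 + j) (n - j) /
        poch (c + b + 1 + (((n + d) / 2 : ℕ) : ℝ) + j) (n - j)) * x ^ j


lemma gammaScaled {A r : ℝ} (hA : -1 < A) (hr : 0 < r) :
    IntegrableOn (fun x => x ^ A * Real.exp (-(r*x))) (Ioi (0:ℝ)) := by
  have h1 := (integrableOn_Ioi_comp_mul_left_iff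
      (fun x : ℝ => Real.exp (-x) * x ^ ((A+1) - 1)) 0 hr).mpr
      (by rw [mul_zero]; exact Real.GammaIntegral_convergent (by linarith))
  have h2 := (h1.const_mul (r ^ (-A)))
  refine (integrableOn_congr_fun (fun x hx => ?_) measurableSet_Ioi).mp h2
  have hx0 : (0:ℝ) < x := hx
  rw [add_sub_cancel_right, Real.mul_rpow hr.le hx0.le]
  rw [show r ^ (-A) * (Real.exp (-(r*x)) * (r ^ A * x ^ A)) =
    (r ^ (-A) * r ^ A) * (x ^ A * Real.exp (-(r*x))) by ring,
    ← Real.rpow_add hr, neg_add_cancel, Real.rpow_zero, one_mul]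

lemma gammaScaledVal {A r : ℝ} (hA : -1 < A) (hr : 0 < r) :
    ∫ x in Ioi (0:ℝ), x ^ A * Real.exp (-(r*x)) = (1/r) ^ (A+1) * Real.Gamma (A+1) := by
  have := Real.integral_rpow_mul_exp_neg_mul_Ioi (a := A+1) (r := r) (by linarith) hr
  rw [← this]
  exact setIntegral_congr_fun measurableSet_Ioi (fun x hx => by rw [add_sub_cancel_right])

/-- Key Fubini lemma. -/
lemma keyFubini (A : ℝ) (hA : -1 < A) (φ : ℝ → ℝ) (hφm : Measurable φ)
    (hφ0 : ∀ t ∈ Ioi (0:ℝ), 0 ≤ φ t)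
    (hint : IntegrableOn (fun t => φ t * (1+t) ^ (-(A+1))) (Ioi (0:ℝ))) :
    (∫ x in Ioi (0:ℝ), x ^ A * Real.exp (-x) * ∫ t in Ioi (0:ℝ), φ t * Real.exp (-(t*x)))
      = Real.Gamma (A+1) * ∫ t in Ioi (0:ℝ), φ t * (1+t) ^ (-(A+1)) ∧
    IntegrableOn (fun x => x ^ A * Real.exp (-x) * ∫ t in Ioi (0:ℝ), φ t * Real.exp (-(t*x)))
      (Ioi (0:ℝ)) := by
  set μ := volume.restrict (Ioi (0:ℝ))
  set F : ℝ → ℝ → ℝ := fun t x => φ t * (x ^ A * Real.exp (-((1+t) * x))) with hF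
  have hFm : AEStronglyMeasurable (Function.uncurry F) (μ.prod μ) := by
    apply Measurable.aestronglyMeasurable
    apply Measurable.mul (hφm.comp measurable_fst)
    exact ((measurable_snd.pow measurable_const).mul (by fun_prop))
  have hone : ∀ t : ℝ, t ∈ Ioi (0:ℝ) → (1/(1+t)) ^ (A+1) = (1+t) ^ (-(A+1)) := by
    intro t ht
    have h1t : (0:ℝ) < 1 + t := by have := mem_Ioi.mp ht; linarith
    rw [one_div, Real.inv_rpow h1t.le, ← Real.rpow_neg h1t.le]
  have hslice : ∀ t : ℝ, t ∈ Ioi (0:ℝ) → Integrable (fun x => F t x) μ := by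
    intro t ht
    have h1t : (0:ℝ) < 1 + t := by have := mem_Ioi.mp ht; linarith
    exact (gammaScaled hA h1t).const_mul (φ t)
  have hsliceval : ∀ t : ℝ, t ∈ Ioi (0:ℝ) →
      ∫ x, F t x ∂μ = Real.Gamma (A+1) * (φ t * (1+t) ^ (-(A+1))) := by
    intro t ht
    have h1t : (0:ℝ) < 1 + t := by have := mem_Ioi.mp ht; linarith
    rw [show (fun x => F t x) = fun x => φ t * (x ^ A * Real.exp (-((1+t)*x))) from rfl]
    rw [integral_const_mul, gammaScaledVal hA h1t, hone t ht]
    ring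
  have hInt : Integrable (Function.uncurry F) (μ.prod μ) := by
    rw [integrable_prod_iff hFm]
    constructor
    · filter_upwards [ae_restrict_mem measurableSet_Ioi] with t ht
      exact hslice t ht
    · refine ((hint.const_mul (Real.Gamma (A+1))).congr ?_)
      filter_upwards [ae_restrict_mem measurableSet_Ioi] with t ht
      have h1t : (0:ℝ) < 1 + t := by have := mem_Ioi.mp ht; linarith
      have hnn : ∀ x ∈ Ioi (0:ℝ), 0 ≤ F t x := by
        intro x hx
        have hx0 : (0:ℝ) < x := hx
        have := hφ0 t ht
        positivity
      have : ∫ x, ‖F t x‖ ∂μ = ∫ x, F t x ∂μ := by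
        refine integral_congr_ae ?_
        filter_upwards [ae_restrict_mem measurableSet_Ioi] with x hx
        exact Real.norm_of_nonneg (hnn x hx)
      exact (hsliceval t ht).symm.trans this.symm
  have hswap := integral_integral_swap hInt
  have hRHS : ∀ x : ℝ, ∫ t, F t x ∂μ
      = x ^ A * Real.exp (-x) * ∫ t in Ioi (0:ℝ), φ t * Real.exp (-(t*x)) := by
    intro x
    rw [← integral_const_mul]
    refine integral_congr_ae (Filter.Eventually.of_forall fun t => ?_)
    show φ t * (x ^ A * Real.exp (-((1+t)*x))) = x ^ A * Real.exp (-x) * (φ t * Real.exp (-(t*x)))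
    rw [show -((1+t)*x) = -x + -(t*x) by ring, Real.exp_add]
    ring
  have hLHS : ∫ t, (∫ x, F t x ∂μ) ∂μ
      = Real.Gamma (A+1) * ∫ t in Ioi (0:ℝ), φ t * (1+t) ^ (-(A+1)) := by
    rw [← integral_const_mul]
    refine setIntegral_congr_ae measurableSet_Ioi (Filter.Eventually.of_forall fun t ht => ?_)
    rw [hsliceval t ht]
  constructor
  · calc (∫ x in Ioi (0:ℝ), x ^ A * Real.exp (-x) * ∫ t in Ioi (0:ℝ), φ t * Real.exp (-(t*x)))
        = ∫ x, (∫ t, F t x ∂μ) ∂μ := by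
          exact integral_congr_ae (Filter.Eventually.of_forall fun x => (hRHS x).symm)
      _ = ∫ t, (∫ x, F t x ∂μ) ∂μ := hswap.symm
      _ = _ := hLHS
  · refine (hInt.integral_prod_right.congr ?_)
    exact Filter.Eventually.of_forall fun x => (hRHS x)

lemma betaInt {u v : ℝ} (hu : 0 < u) (hv : 0 < v) :
    IntegrableOn (fun t => t ^ (u-1) * (1+t) ^ (-(u+v))) (Ioi (0:ℝ)) := by
  have hm : Measurable (fun t : ℝ => t ^ (u-1) * (1+t) ^ (-(u+v))) :=
    (measurable_id.pow measurable_const).mul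
      ((measurable_const.add measurable_id).pow measurable_const)
  have h1 : IntegrableOn (fun t : ℝ => t ^ (u-1) * (1+t) ^ (-(u+v))) (Ioc 0 1) := by
    have hint : IntegrableOn (fun t : ℝ => t ^ (u-1)) (Ioc (0:ℝ) 1) := by
      exact (intervalIntegrable_iff_integrableOn_Ioc_of_le
        (by norm_num : (0:ℝ) ≤ 1)).mp (intervalIntegral.intervalIntegrable_rpow' (by linarith))
    refine Integrable.mono' hint (hm.aestronglyMeasurable.restrict) ?_
    filter_upwards [ae_restrict_mem measurableSet_Ioc] with t ht
    obtain ⟨ht0, ht1⟩ := ht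
    have h1 : (1+t) ^ (-(u+v)) ≤ 1 :=
      Real.rpow_le_one_of_one_le_of_nonpos (by linarith) (by linarith)
    have h2 : (0:ℝ) ≤ t ^ (u-1) := Real.rpow_nonneg ht0.le _
    have h3 : (0:ℝ) ≤ (1+t) ^ (-(u+v)) := Real.rpow_nonneg (by linarith) _
    rw [Real.norm_of_nonneg (mul_nonneg h2 h3)]
    calc t ^ (u-1) * (1+t) ^ (-(u+v)) ≤ t ^ (u-1) * 1 := by gcongr
      _ = t ^ (u-1) := mul_one _
  have h2 : IntegrableOn (fun t : ℝ => t ^ (u-1) * (1+t) ^ (-(u+v))) (Ioi 1) := by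
    have hint : IntegrableOn (fun t : ℝ => t ^ (-v-1)) (Ioi (1:ℝ)) :=
      integrableOn_Ioi_rpow_of_lt (by linarith) one_pos
    refine Integrable.mono' hint (hm.aestronglyMeasurable.restrict) ?_
    filter_upwards [ae_restrict_mem measurableSet_Ioi] with t ht
    have ht1 : (1:ℝ) < t := ht
    have ht0 : (0:ℝ) < t := by linarith
    have h2 : (0:ℝ) ≤ t ^ (u-1) := Real.rpow_nonneg ht0.le _
    have h3 : (0:ℝ) ≤ (1+t) ^ (-(u+v)) := Real.rpow_nonneg (by linarith) _
    rw [Real.norm_of_nonneg (mul_nonneg h2 h3)]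
    calc t ^ (u-1) * (1+t) ^ (-(u+v)) ≤ t ^ (u-1) * t ^ (-(u+v)) :=
          mul_le_mul_of_nonneg_left
            (Real.rpow_le_rpow_of_nonpos ht0 (by linarith) (by linarith)) h2
      _ = t ^ ((u-1) + (-(u+v))) := (Real.rpow_add ht0 _ _).symm
      _ = t ^ (-v-1) := by ring_nf
  have := h1.union h2
  rwa [Ioc_union_Ioi_eq_Ioi (by norm_num : (0:ℝ) ≤ 1)] at this
lemma betaVal {u v : ℝ} (hu : 0 < u) (hv : 0 < v) :
    ∫ t in Ioi (0:ℝ), t ^ (u-1) * (1+t) ^ (-(u+v))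
      = Real.Gamma u * Real.Gamma v / Real.Gamma (u+v) := by
  have hA : (-1:ℝ) < u+v-1 := by linarith
  have hφm : Measurable (fun t : ℝ => t ^ (u-1)) := measurable_id.pow measurable_const
  have hφ0 : ∀ t ∈ Ioi (0:ℝ), (0:ℝ) ≤ t ^ (u-1) := fun t ht => Real.rpow_nonneg (le_of_lt ht) _
  have hint : IntegrableOn (fun t : ℝ => t ^ (u-1) * (1+t) ^ (-(u+v-1+1))) (Ioi (0:ℝ)) := by
    have h := betaInt hu hv
    simpa [show u+v-1+1 = u+v by ring] using h
  obtain ⟨hval, -⟩ := keyFubini (u+v-1) hA _ hφm hφ0 hint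
  have hL : (∫ x in Ioi (0:ℝ), x ^ (u+v-1) * Real.exp (-x) *
        ∫ t in Ioi (0:ℝ), t ^ (u-1) * Real.exp (-(t*x))) = Real.Gamma u * Real.Gamma v := by
    have hptw : ∀ x ∈ Ioi (0:ℝ), x ^ (u+v-1) * Real.exp (-x) *
          (∫ t in Ioi (0:ℝ), t ^ (u-1) * Real.exp (-(t*x)))
        = Real.Gamma u * (Real.exp (-x) * x ^ (v-1)) := by
      intro x hx
      have hx0 : (0:ℝ) < x := hx
      have hinner : (∫ t in Ioi (0:ℝ), t ^ (u-1) * Real.exp (-(t*x)))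
          = (1/x) ^ u * Real.Gamma u := by
        rw [← Real.integral_rpow_mul_exp_neg_mul_Ioi hu hx0]
        exact setIntegral_congr_fun measurableSet_Ioi (fun t ht => by rw [mul_comm t x])
      rw [hinner, one_div, Real.inv_rpow hx0.le, ← Real.rpow_neg hx0.le]
      rw [show x ^ (u+v-1) * Real.exp (-x) * (x ^ (-u) * Real.Gamma u)
          = Real.Gamma u * (Real.exp (-x) * (x ^ (u+v-1) * x ^ (-u))) by ring,
        ← Real.rpow_add hx0, show u+v-1 + -u = v-1 by ring]
    rw [setIntegral_congr_fun measurableSet_Ioi hptw, integral_const_mul,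
      ← Real.Gamma_eq_integral hv]
  rw [hL] at hval
  rw [show u+v-1+1 = u+v by ring] at hval
  rw [eq_div_iff (ne_of_gt (Real.Gamma_pos_of_pos (by linarith))), mul_comm]
  exact hval.symm

lemma Wmoment {a b c' : ℝ} (ha : -1 < a) (hb : -1 < b) (hc' : 0 < c') (m : ℕ) :
    ((∫ x in Ioi (0:ℝ), x ^ m * W a b c' x)
      = (Real.Gamma (a+1+m) / Real.Gamma (a+1)) * (Real.Gamma (b+1+m) / Real.Gamma (b+1))
        * (Real.Gamma (c'+b+1) / Real.Gamma (c'+b+1+m))) ∧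
    IntegrableOn (fun x => x ^ m * W a b c' x) (Ioi (0:ℝ)) := by
  set φ : ℝ → ℝ := fun t => t ^ (c'-1) * (1+t) ^ (a-b-c') with hφ
  set A : ℝ := a + m with hAdef
  have hA : (-1:ℝ) < A := by
    have : (0:ℝ) ≤ m := Nat.cast_nonneg m
    simp only [hAdef]; linarith
  have hφm : Measurable φ := (measurable_id.pow measurable_const).mul
    ((measurable_const.add measurable_id).pow measurable_const)
  have hφ0 : ∀ t ∈ Ioi (0:ℝ), (0:ℝ) ≤ φ t := by
    intro t ht
    have ht0 : (0:ℝ) < t := ht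
    exact mul_nonneg (Real.rpow_nonneg ht0.le _) (Real.rpow_nonneg (by linarith) _)
  have hv : (0:ℝ) < b+1+m := by have : (0:ℝ) ≤ m := Nat.cast_nonneg m; linarith
  have hint : IntegrableOn (fun t : ℝ => φ t * (1+t) ^ (-(A+1))) (Ioi (0:ℝ)) := by
    refine (integrableOn_congr_fun (fun t ht => ?_) measurableSet_Ioi).mpr
      (betaInt hc' hv)
    have ht0 : (0:ℝ) < t := ht
    show φ t * (1+t) ^ (-(A+1)) = t ^ (c'-1) * (1+t) ^ (-(c'+(b+1+m)))
    simp only [hφ]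
    rw [mul_assoc, ← Real.rpow_add (by linarith : (0:ℝ) < 1+t),
      show a-b-c' + -(A+1) = -(c'+(b+1+m)) by simp only [hAdef]; ring]
  obtain ⟨hval, hintg⟩ := keyFubini A hA φ hφm hφ0 hint
  have hKpos : Real.Gamma c' ≠ 0 := ne_of_gt (Real.Gamma_pos_of_pos hc')
  have hptw : ∀ x ∈ Ioi (0:ℝ), x ^ m * W a b c' x
      = (Real.Gamma (c'+b+1) / (Real.Gamma (a+1) * Real.Gamma (b+1)) * (1/Real.Gamma c'))
        * (x ^ A * Real.exp (-x) * ∫ t in Ioi (0:ℝ), φ t * Real.exp (-(t*x))) := by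
    intro x hx
    have hx0 : (0:ℝ) < x := hx
    have hTU : TricomiU c' (a-b+1) x
        = (1/Real.Gamma c') * ∫ t in Ioi (0:ℝ), φ t * Real.exp (-(t*x)) := by
      unfold TricomiU
      congr 1
      refine setIntegral_congr_fun measurableSet_Ioi (fun t ht => ?_)
      simp only [hφ]
      rw [show a-b+1-c'-1 = a-b-c' by ring, neg_mul, mul_assoc]
    have hxp : (x:ℝ) ^ m * x ^ a = x ^ A := by
      rw [← Real.rpow_natCast x m, ← Real.rpow_add hx0, hAdef, add_comm (m:ℝ) a]
    unfold W
    rw [hTU]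
    rw [show x ^ m * (Real.Gamma (c'+b+1) / (Real.Gamma (a+1) * Real.Gamma (b+1))
        * Real.exp (-x) * x ^ a
        * ((1/Real.Gamma c') * ∫ t in Ioi (0:ℝ), φ t * Real.exp (-(t*x))))
      = (Real.Gamma (c'+b+1) / (Real.Gamma (a+1) * Real.Gamma (b+1)) * (1/Real.Gamma c'))
        * ((x ^ m * x ^ a) * Real.exp (-x) * ∫ t in Ioi (0:ℝ), φ t * Real.exp (-(t*x)))
        by ring, hxp]
  have hbeta : (∫ t in Ioi (0:ℝ), φ t * (1+t) ^ (-(A+1)))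
      = Real.Gamma c' * Real.Gamma (b+1+m) / Real.Gamma (c'+(b+1+m)) := by
    rw [← betaVal hc' hv]
    refine setIntegral_congr_fun measurableSet_Ioi (fun t ht => ?_)
    have ht0 : (0:ℝ) < t := ht
    simp only [hφ]
    rw [mul_assoc, ← Real.rpow_add (by linarith : (0:ℝ) < 1+t),
      show a-b-c' + -(A+1) = -(c'+(b+1+m)) by simp only [hAdef]; ring]
  constructor
  · rw [setIntegral_congr_fun measurableSet_Ioi hptw, integral_const_mul, hval, hbeta]
    have h1 : Real.Gamma (A+1) = Real.Gamma (a+1+m) := by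
      rw [hAdef, show a + m + 1 = a+1+m by ring]
    have h2 : Real.Gamma (c'+(b+1+m)) = Real.Gamma (c'+b+1+m) := by ring_nf
    rw [h1, h2]
    have g1 : Real.Gamma (a+1) ≠ 0 := ne_of_gt (Real.Gamma_pos_of_pos (by linarith))
    have g2 : Real.Gamma (b+1) ≠ 0 := ne_of_gt (Real.Gamma_pos_of_pos (by linarith))
    have g3 : Real.Gamma (c'+b+1+m) ≠ 0 := ne_of_gt (Real.Gamma_pos_of_pos (by linarith))
    field_simp
  · exact (integrableOn_congr_fun hptw measurableSet_Ioi).mpr (hintg.const_mul _)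
lemma poch_pos {z : ℝ} (hz : 0 < z) (m : ℕ) : 0 < poch z m := by
  refine Finset.prod_pos (fun i _ => ?_)
  have : (0:ℝ) ≤ i := Nat.cast_nonneg i
  linarith

lemma poch_add (z : ℝ) (p q : ℕ) : poch z (p+q) = poch z p * poch (z+p) q := by
  unfold poch
  rw [Finset.prod_range_add]
  congr 1
  refine Finset.prod_congr rfl (fun i _ => ?_)
  push_cast; ring

lemma pochGamma {z : ℝ} (hz : 0 < z) (m : ℕ) :
    Real.Gamma (z + m) = poch z m * Real.Gamma z := by
  induction m with
  | zero => simp [poch]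
  | succ m ih =>
    have hzm : z + (m:ℝ) ≠ 0 := by
      have : (0:ℝ) ≤ m := Nat.cast_nonneg m
      positivity
    have : z + ((m+1 : ℕ):ℝ) = (z + m) + 1 := by push_cast; ring
    rw [this, Real.Gamma_add_one hzm, ih]
    unfold poch
    rw [Finset.prod_range_succ]
    ring

/-- Polynomial whose evaluation at `x` is `poch (z + x) k`. -/
noncomputable def pochP (z : ℝ) (k : ℕ) : Polynomial ℝ :=
  ∏ i ∈ Finset.range k, (Polynomial.X + Polynomial.C (z + i))

lemma pochP_eval (z : ℝ) (k : ℕ) (x : ℝ) : (pochP z k).eval x = poch (z + x) k := by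
  unfold pochP poch
  rw [Polynomial.eval_prod]
  exact Finset.prod_congr rfl (fun i _ => by simp; ring)

lemma pochP_monic (z : ℝ) (k : ℕ) : (pochP z k).Monic :=
  Polynomial.monic_prod_of_monic _ _ (fun i _ => Polynomial.monic_X_add_C _)

lemma pochP_natDegree (z : ℝ) (k : ℕ) : (pochP z k).natDegree = k := by
  unfold pochP
  rw [Polynomial.natDegree_prod_of_monic _ _ (fun i _ => Polynomial.monic_X_add_C _)]
  simp only [Polynomial.natDegree_X_add_C]
  simp

lemma alt_sum (n : ℕ) (hn : 0 < n) (p : Polynomial ℝ) (hp : p.natDegree < n) :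
    ∑ j ∈ Finset.range (n+1), (-1:ℝ)^j * (n.choose j : ℝ) * p.eval (j:ℝ) = 0 := by
  induction n generalizing p with
  | zero => omega
  | succ n ih =>
    have key : ∑ j ∈ Finset.range (n+2), (-1:ℝ)^j * ((n+1).choose j : ℝ) * p.eval (j:ℝ)
        = ∑ i ∈ Finset.range (n+1), (-1:ℝ)^i * (n.choose i : ℝ)
            * (p.eval (i:ℝ) - p.eval ((i:ℝ)+1)) := by
      have e1 : ∑ j ∈ Finset.range (n+2), (-1:ℝ)^j * ((n+1).choose j : ℝ) * p.eval (j:ℝ)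
          = (∑ i ∈ Finset.range (n+1), (-1:ℝ)^(i+1) * ((n+1).choose (i+1) : ℝ)
              * p.eval ((i:ℝ)+1)) + (-1:ℝ)^0 * ((n+1).choose 0 : ℝ) * p.eval ((0:ℕ):ℝ) := by
        rw [Finset.sum_range_succ' (fun j => (-1:ℝ)^j * ((n+1).choose j : ℝ) * p.eval (j:ℝ)) (n+1)]
        congr 1
        refine Finset.sum_congr rfl (fun i _ => ?_)
        push_cast; ring_nf
      rw [e1]
      have e2 : ∀ i ∈ Finset.range (n+1), (-1:ℝ)^(i+1) * ((n+1).choose (i+1) : ℝ)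
            * p.eval ((i:ℝ)+1)
          = (-((-1:ℝ)^i * (n.choose i : ℝ) * p.eval ((i:ℝ)+1)))
            + (-1:ℝ)^(i+1) * (n.choose (i+1) : ℝ) * p.eval ((i:ℝ)+1) := by
        intro i _
        rw [Nat.choose_succ_succ]
        push_cast
        ring
      have e3 : (∑ i ∈ Finset.range (n+1), (-1:ℝ)^(i+1) * (n.choose (i+1) : ℝ)
            * p.eval ((i:ℝ)+1)) + (-1:ℝ)^0 * ((n+1).choose 0 : ℝ) * p.eval ((0:ℕ):ℝ)
          = ∑ j ∈ Finset.range (n+2), (-1:ℝ)^j * (n.choose j : ℝ) * p.eval (j:ℝ) := by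
        rw [Finset.sum_range_succ' (fun j => (-1:ℝ)^j * (n.choose j : ℝ) * p.eval (j:ℝ)) (n+1)]
        congr 1
        · refine Finset.sum_congr rfl (fun i _ => ?_)
          push_cast; ring_nf
        · norm_num
      have e4 : ∑ j ∈ Finset.range (n+2), (-1:ℝ)^j * (n.choose j : ℝ) * p.eval (j:ℝ)
          = ∑ j ∈ Finset.range (n+1), (-1:ℝ)^j * (n.choose j : ℝ) * p.eval (j:ℝ) := by
        rw [Finset.sum_range_succ]
        simp [Nat.choose_succ_self]
      rw [Finset.sum_congr rfl e2, Finset.sum_add_distrib]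
      have h6 : ∑ i ∈ Finset.range (n+1), -((-1:ℝ)^i * (n.choose i:ℝ) * p.eval ((i:ℝ)+1))
          = -∑ i ∈ Finset.range (n+1), (-1:ℝ)^i * (n.choose i:ℝ) * p.eval ((i:ℝ)+1) := by
        simp
      have e5 := e3.trans e4
      have h7 : ∑ i ∈ Finset.range (n+1), (-1:ℝ)^i * (n.choose i:ℝ)
            * (p.eval (i:ℝ) - p.eval ((i:ℝ)+1))
          = (∑ i ∈ Finset.range (n+1), (-1:ℝ)^i * (n.choose i:ℝ) * p.eval (i:ℝ))
            - ∑ i ∈ Finset.range (n+1), (-1:ℝ)^i * (n.choose i:ℝ) * p.eval ((i:ℝ)+1) := by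
        rw [← Finset.sum_sub_distrib]
        exact Finset.sum_congr rfl (fun i _ => by ring)
      rw [h7]
      linarith [h6, e5]
    rw [key]
    rcases Nat.eq_zero_or_pos n with h0 | hn'
    · subst h0
      have hp0 : p.natDegree = 0 := by omega
      obtain ⟨r, rfl⟩ := Polynomial.natDegree_eq_zero.mp hp0
      simp
    · set q : Polynomial ℝ := p - p.comp (Polynomial.X + Polynomial.C 1) with hq
      have hqe : ∀ i : ℕ, q.eval (i:ℝ) = p.eval (i:ℝ) - p.eval ((i:ℝ)+1) := by
        intro i
        simp [hq, Polynomial.eval_comp]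
      have hqd : q.natDegree < n := by
        by_cases hq0 : q = 0
        · rw [hq0]; simpa using hn'
        rcases Nat.eq_zero_or_pos p.natDegree with hpd | hpd
        · obtain ⟨r, rfl⟩ := Polynomial.natDegree_eq_zero.mp hpd
          simp [hq] at hq0
        · have hcomp_deg : (p.comp (Polynomial.X + Polynomial.C 1)).natDegree = p.natDegree := by
            rw [Polynomial.natDegree_comp, Polynomial.natDegree_X_add_C, mul_one]
          have hpne : p ≠ 0 := by
            intro h; rw [h] at hpd; simp at hpd
          have hcompne : p.comp (Polynomial.X + Polynomial.C 1) ≠ 0 := by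
            intro h
            rw [← hcomp_deg] at hpd
            rw [h] at hpd; simp at hpd
          have hlc : p.leadingCoeff = (p.comp (Polynomial.X + Polynomial.C 1)).leadingCoeff := by
            rw [Polynomial.leadingCoeff_comp (by
              rw [Polynomial.natDegree_X_add_C]; norm_num),
              Polynomial.leadingCoeff_X_add_C, one_pow, mul_one]
          have hdeg : p.degree = (p.comp (Polynomial.X + Polynomial.C 1)).degree := by
            rw [Polynomial.degree_eq_natDegree hpne,
              Polynomial.degree_eq_natDegree hcompne, hcomp_deg]
          have := Polynomial.degree_sub_lt hdeg hpne hlc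
          have h2 : q.degree < p.degree := this
          have h3 : q.natDegree < p.natDegree :=
            Polynomial.natDegree_lt_natDegree hq0 h2
          omega
      have := ih hn' q hqd
      rw [← this]
      exact Finset.sum_congr rfl (fun i _ => by rw [hqe i])
lemma termwise {α β ε : ℝ} (hα : 0 < α) (hβ : 0 < β) (hε : 0 < ε)
    {j n k L : ℕ} (hj : j ≤ n) (hk : k ≤ L) :
    (poch (α+j) (n-j) * poch (β+j) (n-j) / poch (ε+L+j) (n-j)) *
      (poch α (k+j) * poch β (k+j) / poch ε (k+j))
    = (poch α n * poch β n / poch ε (n+L)) *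
      (poch (α+j) k * poch (β+j) k * poch (ε+k+j) (L-k)) := by
  have hjpos : (0:ℝ) ≤ (j:ℝ) := Nat.cast_nonneg j
  have h1 : poch α n = poch α j * poch (α+j) (n-j) := by
    rw [← poch_add]; congr 1; omega
  have h2 : poch β n = poch β j * poch (β+j) (n-j) := by
    rw [← poch_add]; congr 1; omega
  have h3 : poch α (k+j) = poch α j * poch (α+j) k := by
    rw [show k+j = j+k by omega, poch_add]
  have h4 : poch β (k+j) = poch β j * poch (β+j) k := by
    rw [show k+j = j+k by omega, poch_add]
  have hcast : (ε+((k+j:ℕ):ℝ))+((L-k:ℕ):ℝ) = ε+L+j := by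
    rw [Nat.cast_sub hk]; push_cast; ring
  have h5 : poch ε (n+L) = poch ε (k+j) * poch (ε+k+j) (L-k) * poch (ε+L+j) (n-j) := by
    have t1 := poch_add ε (k+j) ((L-k)+(n-j))
    have t2 := poch_add (ε+((k+j:ℕ):ℝ)) (L-k) (n-j)
    rw [t2, hcast] at t1
    rw [show (k+j)+((L-k)+(n-j)) = n+L by omega,
      show ((k+j:ℕ):ℝ) = (k:ℝ)+(j:ℝ) from by push_cast; ring,
      show ε + ((k:ℝ)+(j:ℝ)) = ε+(k:ℝ)+(j:ℝ) from (add_assoc _ _ _).symm] at t1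
    rw [t1]
    ring
  have p1 : 0 < poch α j := poch_pos hα j
  have p2 : 0 < poch β j := poch_pos hβ j
  have p3 : 0 < poch ε (k+j) := poch_pos hε _
  have p4 : 0 < poch (ε+L+j) (n-j) := poch_pos (by positivity) _
  have p5 : 0 < poch (ε+k+j) (L-k) := poch_pos (by positivity) _
  rw [h1, h2, h3, h4, h5]
  field_simp

theorem orthogonality_second_weight (a b c : ℝ) (ha : a > -1) (hb : b > -1)
    (hc : c > max 0 (a - b)) (d : ℕ) (hd : d ≤ 1) (k n : ℕ) (hkn : 2 * k + 2 ≤ n) :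
    ∫ x in Set.Ioi (0:ℝ), x ^ k * Ptype2 d a b c n x * W a b (c + 1 - d) x = 0 := by
  have hc0 : (0:ℝ) < c := lt_of_le_of_lt (le_max_left 0 (a-b)) hc
  have hdR : (d:ℝ) ≤ 1 := by exact_mod_cast hd
  have hdR0 : (0:ℝ) ≤ (d:ℝ) := Nat.cast_nonneg d
  have hc'pos : (0:ℝ) < c + 1 - d := by linarith
  have hn : 0 < n := by omega
  -- natural number bookkeeping
  have hML : ∃ M L : ℕ, M = (n+d)/2 ∧ L = (n+d)/2 + d - 1 ∧ k ≤ L ∧ k + (k + (L-k)) < n ∧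
      ((L:ℝ) = (M:ℝ) + d - 1) := by
    refine ⟨(n+d)/2, (n+d)/2 + d - 1, rfl, rfl, by omega, by omega, ?_⟩
    have h1 : ((n+d)/2 + d - 1) + 1 = (n+d)/2 + d := by omega
    have := congrArg (Nat.cast (R := ℝ)) h1
    push_cast at this
    linarith
  obtain ⟨M, L, hM, hL, hkL, hdeg, hLcast⟩ := hML
  have hεpos : (0:ℝ) < c+1-d+b+1 := by linarith
  have heL : (c+1-(d:ℝ)+b+1) + (L:ℝ) = c + b + 1 + (M:ℝ) := by rw [hLcast]; ring
  -- moments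
  have hmomval : ∀ m : ℕ, (∫ x in Ioi (0:ℝ), x ^ m * W a b (c+1-(d:ℝ)) x)
      = poch (a+1) m * poch (b+1) m / poch (c+1-(d:ℝ)+b+1) m := by
    intro m
    obtain ⟨h1, -⟩ := Wmoment (by linarith : (-1:ℝ) < a) (by linarith : (-1:ℝ) < b) hc'pos m
    rw [h1]
    have ga : (0:ℝ) < a+1 := by linarith
    have gb : (0:ℝ) < b+1 := by linarith
    have ge : (0:ℝ) < c+1-(d:ℝ)+b+1 := hεpos
    rw [show a+1+(m:ℝ) = (a+1)+(m:ℝ) by ring, pochGamma ga m,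
      show b+1+(m:ℝ) = (b+1)+(m:ℝ) by ring, pochGamma gb m,
      show c+1-(d:ℝ)+b+1+(m:ℝ) = (c+1-(d:ℝ)+b+1)+(m:ℝ) by ring, pochGamma ge m]
    have g1 : Real.Gamma (a+1) ≠ 0 := ne_of_gt (Real.Gamma_pos_of_pos ga)
    have g2 : Real.Gamma (b+1) ≠ 0 := ne_of_gt (Real.Gamma_pos_of_pos gb)
    have g3 : Real.Gamma (c+1-(d:ℝ)+b+1) ≠ 0 := ne_of_gt (Real.Gamma_pos_of_pos ge)
    have g4 : poch (c+1-(d:ℝ)+b+1) m ≠ 0 := ne_of_gt (poch_pos ge m)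
    field_simp
  have hmomint : ∀ m : ℕ, IntegrableOn (fun x => x ^ m * W a b (c+1-(d:ℝ)) x) (Ioi (0:ℝ)) :=
    fun m => (Wmoment (by linarith : (-1:ℝ) < a) (by linarith : (-1:ℝ) < b) hc'pos m).2
  -- expand the polynomial
  have hexp : ∀ x : ℝ, x ^ k * Ptype2 d a b c n x * W a b (c+1-(d:ℝ)) x
      = ∑ j ∈ Finset.range (n+1),
          ((-1:ℝ)^(n-j) * (n.choose j : ℝ) *
            (poch (a+1+j) (n-j) * poch (b+1+j) (n-j) /
              poch (c+b+1+(((n+d)/2 : ℕ):ℝ)+j) (n-j)))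
          * (x ^ (k+j) * W a b (c+1-(d:ℝ)) x) := by
    intro x
    unfold Ptype2
    rw [Finset.mul_sum, Finset.sum_mul]
    refine Finset.sum_congr rfl (fun j _ => ?_)
    rw [pow_add]
    ring
  rw [integral_congr_ae (Filter.Eventually.of_forall hexp),
    integral_finset_sum _ (fun j _ => ((hmomint (k+j)).const_mul _))]
  have hsum : ∀ j ∈ Finset.range (n+1),
      (((-1:ℝ)^(n-j) * (n.choose j : ℝ) *
          (poch (a+1+j) (n-j) * poch (b+1+j) (n-j) /
            poch (c+b+1+(((n+d)/2 : ℕ):ℝ)+j) (n-j)))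
        * ∫ x in Ioi (0:ℝ), x ^ (k+j) * W a b (c+1-(d:ℝ)) x)
      = (poch (a+1) n * poch (b+1) n / poch (c+1-(d:ℝ)+b+1) (n+L)) *
          ((-1:ℝ)^n * ((-1:ℝ)^j * (n.choose j : ℝ) *
            (pochP (a+1) k * pochP (b+1) k * pochP (c+1-(d:ℝ)+b+1+k) (L-k)).eval (j:ℝ))) := by
    intro j hj
    have hjn : j ≤ n := by
      have := Finset.mem_range.mp hj; omega
    have hsign : (-1:ℝ)^(n-j) = (-1:ℝ)^n * (-1:ℝ)^j := by
      have h1 : (-1:ℝ)^(n-j) * (-1:ℝ)^j = (-1:ℝ)^n := by rw [← pow_add]; congr 1; omega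
      have h2 : (-1:ℝ)^j * (-1:ℝ)^j = 1 := by rw [← mul_pow]; norm_num
      calc (-1:ℝ)^(n-j) = (-1:ℝ)^(n-j) * ((-1:ℝ)^j * (-1:ℝ)^j) := by rw [h2, mul_one]
        _ = (-1:ℝ)^n * (-1:ℝ)^j := by rw [← mul_assoc, h1]
    have hbase : poch (c+b+1+(((n+d)/2 : ℕ):ℝ)+(j:ℝ)) (n-j)
        = poch ((c+1-(d:ℝ)+b+1)+(L:ℝ)+(j:ℝ)) (n-j) := by
      rw [heL, hM]
    have ht := termwise (show (0:ℝ) < a+1 by linarith) (show (0:ℝ) < b+1 by linarith)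
      hεpos hjn hkL
    have heval : (pochP (a+1) k * pochP (b+1) k
          * pochP (c+1-(d:ℝ)+b+1+(k:ℝ)) (L-k)).eval (j:ℝ)
        = poch (a+1+(j:ℝ)) k * poch (b+1+(j:ℝ)) k
          * poch (c+1-(d:ℝ)+b+1+(k:ℝ)+(j:ℝ)) (L-k) := by
      rw [Polynomial.eval_mul, Polynomial.eval_mul, pochP_eval, pochP_eval, pochP_eval]
    rw [hmomval (k+j), hbase, heval, hsign]
    calc ((-1:ℝ)^n * (-1:ℝ)^j * (n.choose j : ℝ) *
          (poch (a+1+(j:ℝ)) (n-j) * poch (b+1+(j:ℝ)) (n-j) /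
            poch ((c+1-(d:ℝ)+b+1)+(L:ℝ)+(j:ℝ)) (n-j)))
        * (poch (a+1) (k+j) * poch (b+1) (k+j) / poch (c+1-(d:ℝ)+b+1) (k+j))
        = ((-1:ℝ)^n * (-1:ℝ)^j * (n.choose j : ℝ)) *
          ((poch (a+1+(j:ℝ)) (n-j) * poch (b+1+(j:ℝ)) (n-j) /
            poch ((c+1-(d:ℝ)+b+1)+(L:ℝ)+(j:ℝ)) (n-j)) *
          (poch (a+1) (k+j) * poch (b+1) (k+j) / poch (c+1-(d:ℝ)+b+1) (k+j))) := by ring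
      _ = _ := by rw [ht]; ring
  rw [Finset.sum_congr rfl (fun j _ => integral_const_mul _ _)]
  rw [Finset.sum_congr rfl hsum, ← Finset.mul_sum, ← Finset.mul_sum]
  have hqd : (pochP (a+1) k * pochP (b+1) k
      * pochP (c+1-(d:ℝ)+b+1+(k:ℝ)) (L-k)).natDegree < n := by
    rw [Polynomial.Monic.natDegree_mul ((pochP_monic _ _).mul (pochP_monic _ _))
        (pochP_monic _ _),
      Polynomial.Monic.natDegree_mul (pochP_monic _ _) (pochP_monic _ _),
      pochP_natDegree, pochP_natDegree, pochP_natDegree]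
    omega
  rw [alt_sum n hn _ hqd, mul_zero, mul_zero]
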